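/- Let π be an irreducible permutation of {1,…,d} and let P = (p_1<p_2<p_3<p_4) and Q = (q_1<q_2<q_3<q_4) be increasing 4-tuples of elements of {1,…,d} on each of which π restricts to a permutation in the Rauzy class of (4321). Suppose P and Q do not form an accessible pair, and that p_4 < q_1 and max_i π(p_i) < min_j π(q_j). Then there exists an increasing 4-tuple A = (a_1<a_2<a_3<a_4) of elements of {1,…,d} on which π restricts to a permutation in the Rauzy class of (4321), such that A and Q form an accessible pair and the pair of integers (a_1 − p_4, min_i π(a_i) − max_i π(p_i)) is lexicographically strictly smaller than the pair (q_1 − p_4, min_j π(q_j) − max_i π(p_i)). -/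

import Mathlib

/-- The Rauzy class of the permutation `(4321)`, written 0-based. -/
def RauzyClass4321 : Set (Equiv.Perm (Fin 4)) :=
  {σ | (σ⁻¹ 0, σ⁻¹ 1, σ⁻¹ 2, σ⁻¹ 3) ∈
    ({((3 : Fin 4), (2 : Fin 4), (1 : Fin 4), (0 : Fin 4)),
      (3, 1, 0, 2), (3, 0, 2, 1), (1, 3, 2, 0), (2, 1, 3, 0), (1, 3, 0, 2), (2, 0, 3, 1)} :
      Set (Fin 4 × Fin 4 × Fin 4 × Fin 4))}

/-- A permutation of `{0,…,n-1}` is irreducible if it maps no proper initial segment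
`{0,…,k-1}` (with `0 < k < n`) to itself. -/
def PermIrreducible {n : ℕ} (π : Equiv.Perm (Fin n)) : Prop :=
  ∀ k : ℕ, 0 < k → k < n → ∃ i : Fin n, (i : ℕ) < k ∧ k ≤ (π i : ℕ)

/-- `σ` is the restriction of `π` to the `4`-tuple `p`: for all indices `a, b`,
`σ a < σ b` iff `π (p a) < π (p b)`. -/
def RestrictsTo {d : ℕ} (π : Equiv.Perm (Fin d)) (p : Fin 4 → Fin d)
    (σ : Equiv.Perm (Fin 4)) : Prop :=
  ∀ a b : Fin 4, σ a < σ b ↔ π (p a) < π (p b)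

/-- `π` restricts on the `4`-tuple `p` to a permutation in the Rauzy class of `(4321)`. -/
def RestrictsToRauzyClass {d : ℕ} (π : Equiv.Perm (Fin d)) (p : Fin 4 → Fin d) : Prop :=
  ∃ σ ∈ RauzyClass4321, RestrictsTo π p σ

/-- Two increasing `4`-tuples `p`, `q` form an *accessible pair* for `π`: there are
indices `r₁ < r₂` and `s₁ < s₂` such that `p r₁, p r₂, q s₁, q s₂` are pairwise
distinct, `π` restricts on them (listed in increasing order by `u`) to an irreducible
permutation of `{1,2,3,4}` other than the transposition exchanging the first and last
symbols, and `π` acts as a rotation on both `(p r₁, p r₂)` and `(q s₁, q s₂)`. -/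
def AccessiblePair {d : ℕ} (π : Equiv.Perm (Fin d)) (p q : Fin 4 → Fin d) : Prop :=
  ∃ r₁ r₂ s₁ s₂ : Fin 4, r₁ < r₂ ∧ s₁ < s₂ ∧
    ({p r₁, p r₂, q s₁, q s₂} : Finset (Fin d)).card = 4 ∧
    (∃ u : Fin 4 → Fin d, StrictMono u ∧
      Set.range u = ({p r₁, p r₂, q s₁, q s₂} : Set (Fin d)) ∧
      ∃ σ : Equiv.Perm (Fin 4), RestrictsTo π u σ ∧ PermIrreducible σ ∧
        σ ≠ Equiv.swap 0 3) ∧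
    π (p r₂) < π (p r₁) ∧ π (q s₂) < π (q s₁)

/-! ### Auxiliary decidable notions on patterns -/

/-- A decidable rendering of membership in `RauzyClass4321`. -/
def InClass (σ : Equiv.Perm (Fin 4)) : Prop :=
  (σ⁻¹ 0, σ⁻¹ 1, σ⁻¹ 2, σ⁻¹ 3) = ((3 : Fin 4), (2 : Fin 4), (1 : Fin 4), (0 : Fin 4)) ∨
  (σ⁻¹ 0, σ⁻¹ 1, σ⁻¹ 2, σ⁻¹ 3) = (3, 1, 0, 2) ∨
  (σ⁻¹ 0, σ⁻¹ 1, σ⁻¹ 2, σ⁻¹ 3) = (3, 0, 2, 1) ∨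
  (σ⁻¹ 0, σ⁻¹ 1, σ⁻¹ 2, σ⁻¹ 3) = (1, 3, 2, 0) ∨
  (σ⁻¹ 0, σ⁻¹ 1, σ⁻¹ 2, σ⁻¹ 3) = (2, 1, 3, 0) ∨
  (σ⁻¹ 0, σ⁻¹ 1, σ⁻¹ 2, σ⁻¹ 3) = (1, 3, 0, 2) ∨
  (σ⁻¹ 0, σ⁻¹ 1, σ⁻¹ 2, σ⁻¹ 3) = (2, 0, 3, 1)

instance : DecidablePred InClass := fun σ => by unfold InClass; infer_instance

/-- A decidable rendering of `PermIrreducible` for permutations of `Fin 4`. -/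
def Irr4 (σ : Equiv.Perm (Fin 4)) : Prop :=
  (∃ i : Fin 4, (i : ℕ) < 1 ∧ 1 ≤ (σ i : ℕ)) ∧
  (∃ i : Fin 4, (i : ℕ) < 2 ∧ 2 ≤ (σ i : ℕ)) ∧
  (∃ i : Fin 4, (i : ℕ) < 3 ∧ 3 ≤ (σ i : ℕ))

instance : DecidablePred Irr4 := fun σ => by unfold Irr4; infer_instance

/-- A decidable rendering of being the swap of `0` and `3` in `Fin 4`. -/
def IsSwap03 (σ : Equiv.Perm (Fin 4)) : Prop := σ 0 = 3 ∧ σ 1 = 1 ∧ σ 2 = 2 ∧ σ 3 = 0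

instance : DecidablePred IsSwap03 := fun σ => by unfold IsSwap03; infer_instance

/-- The subpattern of `ρ` selected by `c` lies in the Rauzy class. -/
def SubPat (ρ : Equiv.Perm (Fin 5)) (c : Fin 4 → Fin 5) : Prop :=
  ∃ σ : Equiv.Perm (Fin 4), InClass σ ∧ ∀ a b : Fin 4, σ a < σ b ↔ ρ (c a) < ρ (c b)

instance : ∀ ρ c, Decidable (SubPat ρ c) := fun ρ c => by unfold SubPat; infer_instance

/-- Index-level version of `AccessiblePair` inside a pattern `ρ` on `Fin 5`. -/
def AccIdx (ρ : Equiv.Perm (Fin 5)) (c J : Fin 4 → Fin 5) : Prop :=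
  ∃ r₁ r₂ s₁ s₂ : Fin 4, r₁ < r₂ ∧ s₁ < s₂ ∧
    ρ (c r₂) < ρ (c r₁) ∧ ρ (J s₂) < ρ (J s₁) ∧
    (c r₁ ≠ c r₂ ∧ c r₁ ≠ J s₁ ∧ c r₁ ≠ J s₂ ∧ c r₂ ≠ J s₁ ∧ c r₂ ≠ J s₂ ∧ J s₁ ≠ J s₂) ∧
    ∃ t' : Fin 5, (t' ≠ c r₁ ∧ t' ≠ c r₂ ∧ t' ≠ J s₁ ∧ t' ≠ J s₂) ∧
      (∀ x : Fin 5, x ≠ t' → (x = c r₁ ∨ x = c r₂ ∨ x = J s₁ ∨ x = J s₂)) ∧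
      ∃ σ' : Equiv.Perm (Fin 4), Irr4 σ' ∧ ¬IsSwap03 σ' ∧
        ∀ a b : Fin 4, σ' a < σ' b ↔ ρ (t'.succAbove a) < ρ (t'.succAbove b)

set_option synthInstance.maxSize 2000 in
set_option synthInstance.maxHeartbeats 1000000 in
instance : ∀ ρ c J, Decidable (AccIdx ρ c J) := fun ρ c J => by unfold AccIdx; infer_instance

set_option maxRecDepth 100000 in
theorem masterA : ∀ ρ : Equiv.Perm (Fin 5),
    SubPat ρ (Fin.succAbove 0) → (∃ j : Fin 4, ρ (Fin.succAbove 0 j) < ρ 0) →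
    ∃ t : Fin 5, t ≠ 0 ∧ t.succAbove 0 = 0 ∧ SubPat ρ t.succAbove ∧
      AccIdx ρ t.succAbove (Fin.succAbove 0) := by decide

set_option maxRecDepth 100000 in
theorem masterB : ∀ ρ : Equiv.Perm (Fin 5), ∀ i0 : Fin 5, i0 ≠ 0 →
    SubPat ρ i0.succAbove → (∀ j : Fin 4, ρ i0 < ρ (i0.succAbove j)) →
    ∃ t : Fin 5, t ≠ 0 ∧ t ≠ i0 ∧ t.succAbove 0 = 0 ∧ SubPat ρ t.succAbove ∧
      AccIdx ρ t.succAbove i0.succAbove := by decide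

/-! ### Bridging lemmas -/

lemma inClass_iff (σ : Equiv.Perm (Fin 4)) : σ ∈ RauzyClass4321 ↔ InClass σ := by
  simp only [RauzyClass4321, Set.mem_setOf_eq, Set.mem_insert_iff, Set.mem_singleton_iff,
    InClass]

lemma permIrreducible_of_irr4 (σ : Equiv.Perm (Fin 4)) (h : Irr4 σ) : PermIrreducible σ := by
  obtain ⟨h1, h2, h3⟩ := h
  intro k hk0 hk4
  interval_cases k
  · exact h1
  · exact h2
  · exact h3

lemma ne_swap03 (σ : Equiv.Perm (Fin 4)) (h : ¬ IsSwap03 σ) : σ ≠ Equiv.swap 0 3 := by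
  intro he
  exact h (by subst he; exact ⟨by decide, by decide, by decide, by decide⟩)

lemma card4 {α : Type*} [DecidableEq α] {a b c e : α}
    (h1 : a ≠ b) (h2 : a ≠ c) (h3 : a ≠ e) (h4 : b ≠ c) (h5 : b ≠ e) (h6 : c ≠ e) :
    ({a, b, c, e} : Finset α).card = 4 := by
  rw [Finset.card_insert_of_notMem (by simp [h1, h2, h3]),
      Finset.card_insert_of_notMem (by simp [h4, h5]),
      Finset.card_insert_of_notMem (by simp [h6])]
  rfl

lemma strictMono_vec5 {d : ℕ} {v0 v1 v2 v3 v4 : Fin d} (h01 : v0 < v1) (h12 : v1 < v2)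
    (h23 : v2 < v3) (h34 : v3 < v4) : StrictMono ![v0, v1, v2, v3, v4] := by
  rw [Fin.strictMono_iff_lt_succ]
  intro i
  fin_cases i
  · exact h01
  · exact h12
  · exact h23
  · exact h34

/-- Any injective tuple has a pattern permutation. -/
lemma exists_pattern {n d : ℕ} (v : Fin n → Fin d) (hv : Function.Injective v) :
    ∃ ρ : Equiv.Perm (Fin n), ∀ a b : Fin n, ρ a < ρ b ↔ v a < v b := by
  classical
  set s : Finset (Fin d) := Finset.image v Finset.univ with hs
  have hcard : s.card = n := by
    rw [hs, Finset.card_image_of_injective _ hv, Finset.card_univ, Fintype.card_fin]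
  set e := s.orderIsoOfFin hcard with he
  have hmem : ∀ i, v i ∈ s := fun i => by simp [hs]
  set g : Fin n → Fin n := fun i => e.symm ⟨v i, hmem i⟩ with hg
  have hglt : ∀ a b, g a < g b ↔ v a < v b := fun a b => by
    simp only [hg, OrderIso.lt_iff_lt, Subtype.mk_lt_mk]
  have hginj : Function.Injective g := by
    intro a b hab
    apply hv
    apply le_antisymm
    · exact not_lt.mp (fun h => by rw [← hglt b a, hab] at h; exact lt_irrefl _ h)
    · exact not_lt.mp (fun h => by rw [← hglt a b, ← hab] at h; exact lt_irrefl _ h)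
  exact ⟨Equiv.ofBijective g (Finite.injective_iff_bijective.mp hginj), fun a b => hglt a b⟩

/-- The main bridge: index-level data about the pattern `ρ` of `π` along `w` yields
the actual conclusion about `π`. -/
lemma bridge {d : ℕ} (π : Equiv.Perm (Fin d)) (q : Fin 4 → Fin d) (w : Fin 5 → Fin d)
    (hw : StrictMono w) (ρ : Equiv.Perm (Fin 5))
    (hρ : ∀ a b, ρ a < ρ b ↔ π (w a) < π (w b))
    (t i0 : Fin 5)
    (hqw : ∀ j, w (i0.succAbove j) = q j)
    (hsub : SubPat ρ t.succAbove)
    (hai : AccIdx ρ t.succAbove i0.succAbove) :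
    StrictMono (w ∘ t.succAbove) ∧ RestrictsToRauzyClass π (w ∘ t.succAbove) ∧
      AccessiblePair π (w ∘ t.succAbove) q := by
  have hwmono := hw.comp (Fin.strictMono_succAbove t)
  refine ⟨hwmono, ?_, ?_⟩
  · obtain ⟨σ, hσC, hσ⟩ := hsub
    exact ⟨σ, (inClass_iff σ).mpr hσC, fun a b => (hσ a b).trans (hρ _ _)⟩
  · obtain ⟨r₁, r₂, s₁, s₂, hr, hs, hrot1, hrot2, ⟨d1, d2, d3, d4, d5, d6⟩, t',
      ⟨e1, e2, e3, e4⟩, hcover, σ', hirr, hnsw, hσ'⟩ := hai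
    refine ⟨r₁, r₂, s₁, s₂, hr, hs, ?_, ?_, ?_, ?_⟩
    · simp only [Function.comp_apply, ← hqw s₁, ← hqw s₂]
      exact card4 (hw.injective.ne d1) (hw.injective.ne d2) (hw.injective.ne d3)
        (hw.injective.ne d4) (hw.injective.ne d5) (hw.injective.ne d6)
    · refine ⟨w ∘ t'.succAbove, hw.comp (Fin.strictMono_succAbove t'), ?_, σ',
        fun a b => (hσ' a b).trans (hρ _ _), permIrreducible_of_irr4 σ' hirr,
        ne_swap03 σ' hnsw⟩
      ext y
      simp only [Set.mem_range, Function.comp_apply, Set.mem_insert_iff,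
        Set.mem_singleton_iff, ← hqw s₁, ← hqw s₂]
      constructor
      · rintro ⟨k, rfl⟩
        rcases hcover (t'.succAbove k) (Fin.succAbove_ne t' k) with h | h | h | h <;>
          rw [h] <;> tauto
      · rintro (rfl | rfl | rfl | rfl)
        · obtain ⟨k, hk⟩ := Fin.exists_succAbove_eq (Ne.symm e1)
          exact ⟨k, by rw [hk]⟩
        · obtain ⟨k, hk⟩ := Fin.exists_succAbove_eq (Ne.symm e2)
          exact ⟨k, by rw [hk]⟩
        · obtain ⟨k, hk⟩ := Fin.exists_succAbove_eq (Ne.symm e3)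
          exact ⟨k, by rw [hk]⟩
        · obtain ⟨k, hk⟩ := Fin.exists_succAbove_eq (Ne.symm e4)
          exact ⟨k, by rw [hk]⟩
    · exact (hρ _ _).mp hrot1
    · rw [← hqw s₁, ← hqw s₂]
      exact (hρ _ _).mp hrot2

/-- Insertion of a point `z > q 0` distinct from all `q j` into the tuple `q`. -/
lemma insert_tuple {d : ℕ} {q : Fin 4 → Fin d} (hq : StrictMono q) {z : Fin d}
    (h0 : q 0 < z) (hne : ∀ j, z ≠ q j) :
    ∃ (w : Fin 5 → Fin d) (i0 : Fin 5), StrictMono w ∧ i0 ≠ 0 ∧ w i0 = z ∧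
      ∀ j, w (i0.succAbove j) = q j := by
  have h01 : q 0 < q 1 := hq (by decide)
  have h12 : q 1 < q 2 := hq (by decide)
  have h23 : q 2 < q 3 := hq (by decide)
  rcases lt_trichotomy z (q 1) with h1 | h1 | h1
  · exact ⟨![q 0, z, q 1, q 2, q 3], 1, strictMono_vec5 h0 h1 h12 h23, by decide, rfl,
      fun j => by fin_cases j <;> rfl⟩
  · exact absurd h1 (hne 1)
  · rcases lt_trichotomy z (q 2) with h2 | h2 | h2
    · exact ⟨![q 0, q 1, z, q 2, q 3], 2, strictMono_vec5 h01 h1 h2 h23, by decide, rfl,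
        fun j => by fin_cases j <;> rfl⟩
    · exact absurd h2 (hne 2)
    · rcases lt_trichotomy z (q 3) with h3 | h3 | h3
      · exact ⟨![q 0, q 1, q 2, z, q 3], 3, strictMono_vec5 h01 h12 h2 h3, by decide, rfl,
          fun j => by fin_cases j <;> rfl⟩
      · exact absurd h3 (hne 3)
      · exact ⟨![q 0, q 1, q 2, q 3, z], 4, strictMono_vec5 h01 h12 h23 h3, by decide, rfl,
          fun j => by fin_cases j <;> rfl⟩

/-- Decreasing distance: if `P`, `Q` are non-accessible with `P` entirely preceding `Q`
(in position and image), there is a `4`-tuple `A` in the Rauzy class of `(4321)` that is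
accessible from `Q` and lexicographically strictly closer to `P`. -/
theorem decrease_distance (d : ℕ) (π : Equiv.Perm (Fin d))
    (hπ : PermIrreducible π) (p q : Fin 4 → Fin d)
    (hp : StrictMono p) (hq : StrictMono q)
    (hpR : RestrictsToRauzyClass π p) (hqR : RestrictsToRauzyClass π q)
    (hacc : ¬ AccessiblePair π p q)
    (hpos : p 3 < q 0)
    (himg : ∀ i j : Fin 4, π (p i) < π (q j)) :
    ∃ a : Fin 4 → Fin d, StrictMono a ∧ RestrictsToRauzyClass π a ∧
      AccessiblePair π a q ∧
      ((((a 0 : ℕ) : ℤ) - ((p 3 : ℕ) : ℤ) < ((q 0 : ℕ) : ℤ) - ((p 3 : ℕ) : ℤ)) ∨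
        (((a 0 : ℕ) : ℤ) - ((p 3 : ℕ) : ℤ) = ((q 0 : ℕ) : ℤ) - ((p 3 : ℕ) : ℤ) ∧
          (Finset.univ.inf' Finset.univ_nonempty (fun i => ((π (a i) : ℕ) : ℤ))) -
            (Finset.univ.sup' Finset.univ_nonempty (fun i => ((π (p i) : ℕ) : ℤ))) <
          (Finset.univ.inf' Finset.univ_nonempty (fun j => ((π (q j) : ℕ) : ℤ))) -
            (Finset.univ.sup' Finset.univ_nonempty (fun i => ((π (p i) : ℕ) : ℤ))))) := by
  obtain ⟨τ, hτC, hτ⟩ := hqR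
  by_cases hA : ∃ x : Fin d, x < q 0 ∧ ∃ j : Fin 4, π (q j) ≤ π x
  · -- Case A: a point to the left of `q 0` with image at least the minimum of the images of `q`
    obtain ⟨x, hxq, j, hj⟩ := hA
    have hxqj : ∀ i : Fin 4, x ≠ q i := fun i h =>
      absurd hxq (by rw [h]; exact not_lt.mpr (hq.monotone (Fin.zero_le i)))
    set w : Fin 5 → Fin d := ![x, q 0, q 1, q 2, q 3] with hwdef
    have hw : StrictMono w :=
      strictMono_vec5 hxq (hq (by decide)) (hq (by decide)) (hq (by decide))
    have hqw : ∀ j : Fin 4, w ((0 : Fin 5).succAbove j) = q j := fun j => by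
      fin_cases j <;> rfl
    obtain ⟨ρ, hρ0⟩ := exists_pattern (fun i => π (w i)) (π.injective.comp hw.injective)
    have hρ : ∀ a b, ρ a < ρ b ↔ π (w a) < π (w b) := hρ0
    have hsub : SubPat ρ (Fin.succAbove 0) := by
      refine ⟨τ, (inClass_iff τ).mp hτC, fun a b => (hτ a b).trans ?_⟩
      rw [← hqw a, ← hqw b, ← hρ]
    have hex : ∃ j : Fin 4, ρ (Fin.succAbove 0 j) < ρ 0 := by
      refine ⟨j, (hρ _ _).mpr ?_⟩
      rw [hqw]
      show π (q j) < π (w 0)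
      exact lt_of_le_of_ne hj (π.injective.ne (hxqj j).symm ∘ Eq.symm ∘ Eq.symm) |>.trans_eq rfl
    obtain ⟨t, ht0, htz, hsubt, haidx⟩ := masterA ρ hsub hex
    obtain ⟨hmono, hR, hAcc⟩ := bridge π q w hw ρ hρ t 0 hqw hsubt haidx
    refine ⟨w ∘ t.succAbove, hmono, hR, hAcc, Or.inl ?_⟩
    have ha0 : (w ∘ t.succAbove) 0 = x := by
      show w (t.succAbove 0) = x
      rw [htz]
      rfl
    have : ((w ∘ t.succAbove) 0 : ℕ) < (q 0 : ℕ) := by rw [ha0]; exact hxq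
    omega
  · -- Case B: every point to the left of `q 0` has image below all images of `q`
    push_neg at hA
    obtain ⟨k0, -, hk0⟩ := Finset.exists_min_image Finset.univ (fun j => π (q j))
      ⟨0, Finset.mem_univ 0⟩
    have hk0' : ∀ j, π (q k0) ≤ π (q j) := fun j => hk0 j (Finset.mem_univ j)
    -- the image of `Iio (q 0)` under `π` is contained in `Iio (π (q k0))`
    have hsubset : (Finset.Iio (q 0)).image π ⊆ Finset.Iio (π (q k0)) := by
      intro v hv
      obtain ⟨x, hx, rfl⟩ := Finset.mem_image.mp hv
      exact Finset.mem_Iio.mpr (hA x (Finset.mem_Iio.mp hx) k0)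
    have hcardS : ((Finset.Iio (q 0)).image π).card = (q 0 : ℕ) := by
      rw [Finset.card_image_of_injective _ π.injective, Fin.card_Iio]
    have hq0pos : 0 < (q 0 : ℕ) := by
      have := hpos
      omega
    -- strict inequality `q 0 < π (q k0)` using irreducibility of `π`
    have hlt : (q 0 : ℕ) < (π (q k0) : ℕ) := by
      have hle : (q 0 : ℕ) ≤ (π (q k0) : ℕ) := by
        have := Finset.card_le_card hsubset
        rwa [hcardS, Fin.card_Iio] at this
      rcases lt_or_eq_of_le hle with h | h
      · exact h
      · exfalso
        obtain ⟨i, hi1, hi2⟩ := hπ (q 0 : ℕ) hq0pos (q 0).isLt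
        have : π i < π (q k0) := hA i hi1 k0
        have hval : (π i : ℕ) < (π (q k0) : ℕ) := this
        omega
    -- find `z` with `q 0 < z` and `π z` below all images of `q`
    have hssub : (Finset.Iio (q 0)).image π ⊂ Finset.Iio (π (q k0)) := by
      refine Finset.ssubset_iff_of_subset hsubset |>.mpr ?_
      by_contra hcon
      push_neg at hcon
      have : Finset.Iio (π (q k0)) ⊆ (Finset.Iio (q 0)).image π := fun v hv => hcon v hv
      have := Finset.card_le_card this
      rw [hcardS, Fin.card_Iio] at this
      omega
    obtain ⟨v, hvT, hvS⟩ := Finset.exists_of_ssubset hssub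
    set z : Fin d := π.symm v with hz
    have hπz : π z = v := π.apply_symm_apply v
    have hzlt : ∀ j, π z < π (q j) := fun j =>
      lt_of_lt_of_le (by rw [hπz]; exact Finset.mem_Iio.mp hvT) (hk0' j)
    have hzq : ¬ z < q 0 := fun hcon =>
      hvS (Finset.mem_image.mpr ⟨z, Finset.mem_Iio.mpr hcon, hπz⟩)
    have hzne : ∀ j, z ≠ q j := fun j h => absurd (hzlt j) (by rw [h]; exact lt_irrefl _)
    have hz0 : q 0 < z := lt_of_le_of_ne (not_lt.mp hzq) (Ne.symm (hzne 0))
    obtain ⟨w, i0, hw, hi0, hwz, hqw⟩ := insert_tuple hq hz0 hzne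
    obtain ⟨ρ, hρ0⟩ := exists_pattern (fun i => π (w i)) (π.injective.comp hw.injective)
    have hρ : ∀ a b, ρ a < ρ b ↔ π (w a) < π (w b) := hρ0
    have hsub : SubPat ρ i0.succAbove := by
      refine ⟨τ, (inClass_iff τ).mp hτC, fun a b => (hτ a b).trans ?_⟩
      rw [← hqw a, ← hqw b, ← hρ]
    have hmin : ∀ j : Fin 4, ρ i0 < ρ (i0.succAbove j) := fun j =>
      (hρ _ _).mpr (by rw [hqw, hwz]; exact hzlt j)
    obtain ⟨t, ht0, hti0, htz, hsubt, haidx⟩ := masterB ρ i0 hi0 hsub hmin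
    obtain ⟨hmono, hR, hAcc⟩ := bridge π q w hw ρ hρ t i0 hqw hsubt haidx
    refine ⟨w ∘ t.succAbove, hmono, hR, hAcc, Or.inr ⟨?_, ?_⟩⟩
    · have ha0 : (w ∘ t.succAbove) 0 = q 0 := by
        show w (t.succAbove 0) = q 0
        rw [htz, ← hqw 0]
        congr 1
        have : (0 : Fin 4).castSucc < i0 := Fin.pos_iff_ne_zero.mpr hi0
        rw [Fin.succAbove_of_castSucc_lt _ _ this]
        rfl
      rw [ha0]
    · apply sub_lt_sub_right
      obtain ⟨k, hk⟩ := Fin.exists_succAbove_eq (Ne.symm hti0)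
      have h1 : (Finset.univ.inf' Finset.univ_nonempty
          (fun i => ((π ((w ∘ t.succAbove) i) : ℕ) : ℤ))) ≤ ((π z : ℕ) : ℤ) := by
        have := Finset.inf'_le (fun i => ((π ((w ∘ t.succAbove) i) : ℕ) : ℤ))
          (Finset.mem_univ k)
        simp only [Function.comp_apply, hk, hwz] at this
        exact this
      have h2 : ((π z : ℕ) : ℤ) < Finset.univ.inf' Finset.univ_nonempty
          (fun j => ((π (q j) : ℕ) : ℤ)) := by
        rw [Finset.lt_inf'_iff]
        intro j _
        have : (π z : ℕ) < (π (q j) : ℕ) := hzlt j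
        exact_mod_cast this
      exact lt_of_le_of_lt h1 h2
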